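/- Let A ⊆ B be a non-degenerate C*-inclusion with A commutative. Then A is maximal abelian in B (that is, every b ∈ B with b·a = a·b for all a ∈ A lies in A) if and only if for every closed two-sided ideal I of A, every multiplier τ ∈ M(IBI) that commutes with I satisfies τ·x ∈ I for all x ∈ I. -/

import Mathlib

open scoped MultiplierAlgebra

noncomputable section

namespace NCCartan

variable {B : Type*} [NonUnitalCStarAlgebra B] [PartialOrder B] [StarOrderedRing B]

/-- A closed two-sided ideal of the C*-subalgebra of `B` with carrier `A`. -/
structure CIdealIn (A : Set B) where
  carrier : Set B
  subset : carrier ⊆ A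
  zero_mem : (0 : B) ∈ carrier
  add_mem : ∀ x ∈ carrier, ∀ y ∈ carrier, x + y ∈ carrier
  smul_mem : ∀ (c : ℂ), ∀ x ∈ carrier, c • x ∈ carrier
  mul_left : ∀ a ∈ A, ∀ x ∈ carrier, a * x ∈ carrier
  mul_right : ∀ a ∈ A, ∀ x ∈ carrier, x * a ∈ carrier
  isClosed : IsClosed carrier

/-- The inclusion `A ⊆ B` is non-degenerate: the closed linear span of `A·B` is all of `B`. -/
def Nondegenerate (A : Set B) : Prop :=
  Dense ((Submodule.span ℂ {x : B | ∃ a ∈ A, ∃ b : B, x = a * b} : Submodule ℂ B) : Set B)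

/-- `b` is a normaliser of `A` in `B`. -/
def IsNormalizerOf (A : Set B) (b : B) : Prop :=
  (∀ a ∈ A, b * a * star b ∈ A) ∧ (∀ a ∈ A, star b * a * b ∈ A)

/-- The inclusion `A ⊆ B` is regular: it is non-degenerate and the linear span of the
normalisers is dense in `B`. -/
def RegularInclusion (A : Set B) : Prop :=
  Nondegenerate A ∧
    Dense ((Submodule.span ℂ {b : B | IsNormalizerOf A b} : Submodule ℂ B) : Set B)

/-- A conditional expectation from `B` onto the C*-subalgebra with carrier `A`. -/
structure CondExp (A : Set B) where
  toFun : B →ₗ[ℂ] B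
  mem_range : ∀ b : B, toFun b ∈ A
  fixes : ∀ a ∈ A, toFun a = a
  contractive : ∀ b : B, ‖toFun b‖ ≤ ‖b‖
  positive : ∀ b : B, 0 ≤ b → 0 ≤ toFun b
  bimodule : ∀ a ∈ A, ∀ c ∈ A, ∀ b : B, toFun (a * b * c) = a * toFun b * c

/-- `E` is faithful: `E(b* b) = 0` implies `b = 0`. -/
def CondExp.Faithful {A : Set B} (E : CondExp A) : Prop :=
  ∀ b : B, E.toFun (star b * b) = 0 → b = 0

/-- `E` is almost faithful: `E((b c)* (b c)) = 0` for all `c` implies `b = 0`. -/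
def CondExp.AlmostFaithful {A : Set B} (E : CondExp A) : Prop :=
  ∀ b : B, (∀ c : B, E.toFun (star (b * c) * (b * c)) = 0) → b = 0

/-- The set `IBI`: the closed linear span of `{x b y : x, y ∈ I, b ∈ B}`. -/
def IBISet (I : Set B) : Set B :=
  closure ((Submodule.span ℂ {z : B | ∃ p ∈ I, ∃ b : B, ∃ q ∈ I, z = p * b * q} :
    Submodule ℂ B) : Set B)

/-- A conditional expectation from the C*-subalgebra of `B` with carrier `C` onto the
ideal with carrier `I ⊆ C`; only the values of `toFun` on `C` are relevant. -/
structure CondExpOnSub (C : Set B) (I : Set B) where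
  toFun : B → B
  map_add : ∀ x ∈ C, ∀ y ∈ C, toFun (x + y) = toFun x + toFun y
  map_smul : ∀ (c : ℂ), ∀ x ∈ C, toFun (c • x) = c • toFun x
  mem_range : ∀ x ∈ C, toFun x ∈ I
  fixes : ∀ x ∈ I, toFun x = x
  contractive : ∀ x ∈ C, ‖toFun x‖ ≤ ‖x‖
  positive : ∀ x ∈ C, 0 ≤ x → 0 ≤ toFun x
  bimodule : ∀ p ∈ I, ∀ q ∈ I, ∀ b ∈ C, toFun (p * b * q) = p * toFun b * q

def CondExpOnSub.Faithful {C I : Set B} (P : CondExpOnSub C I) : Prop :=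
  ∀ x ∈ C, P.toFun (star x * x) = 0 → x = 0

def CondExpOnSub.AlmostFaithful {C I : Set B} (P : CondExpOnSub C I) : Prop :=
  ∀ x ∈ C, (∀ c ∈ C, P.toFun (star (x * c) * (x * c)) = 0) → x = 0

/-- A virtual commutant of `A` in `B` defined on the ideal with carrier `I`;
only the values of `toFun` on `I` are relevant. -/
structure VirtualCommutant (A : Set B) (I : Set B) where
  toFun : B → B
  map_add : ∀ x ∈ I, ∀ y ∈ I, toFun (x + y) = toFun x + toFun y
  map_smul : ∀ (c : ℂ), ∀ x ∈ I, toFun (c • x) = c • toFun x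
  left_mod : ∀ a ∈ A, ∀ x ∈ I, toFun (a * x) = a * toFun x
  right_mod : ∀ a ∈ A, ∀ x ∈ I, toFun (x * a) = toFun x * a

/-- A slice for the inclusion `A ⊆ B`: a closed linear subspace `M` with `A·M ⊆ M`,
`M·A ⊆ M`, `M*·M ⊆ A` and `M·M* ⊆ A`. -/
structure IsSlice (A : Set B) (M : Submodule ℂ B) : Prop where
  isClosed : IsClosed (M : Set B)
  mul_left : ∀ a ∈ A, ∀ m ∈ M, a * m ∈ M
  mul_right : ∀ a ∈ A, ∀ m ∈ M, m * a ∈ M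
  star_mul_mem : ∀ m ∈ M, ∀ n ∈ M, star m * n ∈ A
  mul_star_mem : ∀ m ∈ M, ∀ n ∈ M, m * star n ∈ A

/-- An isomorphism of Hilbert `A`-bimodules from the ideal with carrier `I` onto the
subset `M` of `B`; only the values of `toFun` on `I` are relevant. -/
structure HilbertBimoduleIso (A : Set B) (I : Set B) (M : Set B) where
  toFun : B → B
  map_add : ∀ x ∈ I, ∀ y ∈ I, toFun (x + y) = toFun x + toFun y
  map_smul : ∀ (c : ℂ), ∀ x ∈ I, toFun (c • x) = c • toFun x
  maps_into : ∀ x ∈ I, toFun x ∈ M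
  injOn : ∀ x ∈ I, ∀ y ∈ I, toFun x = toFun y → x = y
  surjOn : ∀ m ∈ M, ∃ x ∈ I, toFun x = m
  bimod : ∀ a ∈ A, ∀ b ∈ A, ∀ x ∈ I, toFun (a * x * b) = a * toFun x * b
  inner_right : ∀ x ∈ I, ∀ y ∈ I, star (toFun x) * toFun y = star x * y
  inner_left : ∀ x ∈ I, ∀ y ∈ I, toFun x * star (toFun y) = x * star y

/-- A hereditary C*-subalgebra `D` of the C*-subalgebra with carrier `A`. -/
structure IsHereditarySubalgebra (A : Set B) (D : Set B) : Prop where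
  subset : D ⊆ A
  zero_mem : (0 : B) ∈ D
  add_mem : ∀ x ∈ D, ∀ y ∈ D, x + y ∈ D
  smul_mem : ∀ (c : ℂ), ∀ x ∈ D, c • x ∈ D
  mul_mem : ∀ x ∈ D, ∀ y ∈ D, x * y ∈ D
  star_mem : ∀ x ∈ D, star x ∈ D
  isClosed : IsClosed D
  hereditary : ∀ x ∈ A, ∀ a ∈ D, 0 ≤ x → x ≤ a → x ∈ D

/-- Kishimoto's condition for an element `y ∈ B` relative to `A`. -/
def Kishimoto (A : Set B) (y : B) : Prop :=
  ∀ D : Set B, IsHereditarySubalgebra A D → D ≠ {0} → ∀ ε : ℝ, 0 < ε →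
    ∃ a ∈ D, 0 ≤ a ∧ ‖a‖ = 1 ∧ ‖a * y * a‖ < ε

/-- The inclusion `A ⊆ B` is aperiodic. -/
def AperiodicInclusion (A : Set B) : Prop :=
  ∀ b : B, ∀ D : Set B, IsHereditarySubalgebra A D → D ≠ {0} → ∀ ε : ℝ, 0 < ε →
    ∃ a ∈ D, 0 ≤ a ∧ ‖a‖ = 1 ∧ Metric.infDist (a * b * a) A < ε

/-- Every virtual commutant of `A` in `B` has range contained in `A`. -/
def VirtualCommutantsTrivial (A : Set B) : Prop :=
  ∀ I : CIdealIn A, ∀ φ : VirtualCommutant A I.carrier, ∀ x ∈ I.carrier, φ.toFun x ∈ A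

/-- For every closed two-sided ideal `I` of `A`, every multiplier of `IBI` commuting with `I`
maps `I` into `I`. -/
def CommutingMultipliersTrivial (A : Set B) : Prop :=
  ∀ I : CIdealIn A, ∀ C : NonUnitalStarSubalgebra ℂ B, (C : Set B) = IBISet I.carrier →
    ∀ τ : 𝓜(ℂ, C), (∀ x : C, (x : B) ∈ I.carrier → τ.fst x = τ.snd x) →
      ∀ x : C, (x : B) ∈ I.carrier → ((τ.fst x : C) : B) ∈ I.carrier

/-- Every slice isomorphic as a Hilbert `A`-bimodule to a closed two-sided ideal `I` of `A`
equals `I`. -/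
def SlicesIsoIdealsTrivial (A : Set B) : Prop :=
  ∀ I : CIdealIn A, ∀ M : Submodule ℂ B, IsSlice A M →
    Nonempty (HilbertBimoduleIso A I.carrier (M : Set B)) → (M : Set B) = I.carrier

/-- `E` is faithful and, for every closed two-sided ideal `I` of `A`, the restriction of `E`
to `IBI` is the only conditional expectation from `IBI` onto `I`. -/
def UniqueExpectationOnIdeals (A : Set B) (E : CondExp A) : Prop :=
  E.Faithful ∧ ∀ I : CIdealIn A,
    (∃ P : CondExpOnSub (IBISet I.carrier) I.carrier,
      ∀ x ∈ IBISet I.carrier, P.toFun x = E.toFun x) ∧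
    (∀ P : CondExpOnSub (IBISet I.carrier) I.carrier,
      ∀ x ∈ IBISet I.carrier, P.toFun x = E.toFun x)

/-- For every closed two-sided ideal `I` of `A` there is exactly one faithful conditional
expectation from `IBI` onto `I`. -/
def UniqueFaithfulExpectationOnIdeals (A : Set B) : Prop :=
  ∀ I : CIdealIn A,
    ∃ P : CondExpOnSub (IBISet I.carrier) I.carrier, P.Faithful ∧
      ∀ Q : CondExpOnSub (IBISet I.carrier) I.carrier, Q.Faithful →
        ∀ x ∈ IBISet I.carrier, Q.toFun x = P.toFun x

/-- `A ⊆ B` is a noncommutative Cartan subalgebra in the sense of Exel. -/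
def IsNCCartan (A : Set B) : Prop :=
  RegularInclusion A ∧ (∃ E : CondExp A, E.AlmostFaithful) ∧ VirtualCommutantsTrivial A

/-- `A` detects ideals in `B`. -/
def DetectsIdeals (A : Set B) : Prop :=
  ∀ J : CIdealIn (Set.univ : Set B), J.carrier ≠ {0} → J.carrier ∩ A ≠ {0}

/-- `A` supports `B`. -/
def Supports (A : Set B) : Prop :=
  ∀ b : B, 0 ≤ b → b ≠ 0 → ∃ a ∈ A, 0 ≤ a ∧ a ≠ 0 ∧
    ∀ ε : ℝ, 0 < ε → ∃ x : B, ‖star x * b * x - a‖ < ε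

/-- The C*-algebra with carrier `A` is prime: any two nonzero closed two-sided ideals have
nonzero intersection. -/
def IsPrimeCStarSet (A : Set B) : Prop :=
  ∀ I J : CIdealIn A, I.carrier ≠ {0} → J.carrier ≠ {0} → I.carrier ∩ J.carrier ≠ {0}

end NCCartan

open NCCartan

namespace NCCartanAux

variable {B : Type*} [NonUnitalCStarAlgebra B] [PartialOrder B] [StarOrderedRing B]

lemma cfcn_mem {S : Set B} (hcl : IsClosed S) (h0S : (0:B) ∈ S)
    (hadd : ∀ x ∈ S, ∀ y ∈ S, x + y ∈ S) (hsmul : ∀ (c : ℂ), ∀ x ∈ S, c • x ∈ S)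
    (hmul : ∀ x ∈ S, ∀ y ∈ S, x * y ∈ S) {h : B} (hh : h ∈ S) (hsa : IsSelfAdjoint h)
    (f : ℝ → ℝ) (hf : ContinuousOn f (quasispectrum ℝ h)) (hf0 : f 0 = 0) :
    cfcₙ f h ∈ S := by
  rw [cfcₙ_apply f h]
  have key : ∀ g' : ContinuousMapZero (quasispectrum ℝ h) ℝ, cfcₙHom hsa g' ∈ S := fun g' =>
    ContinuousMapZero.induction_on_of_compact
      (p := fun g'' => cfcₙHom hsa g'' ∈ S)
      (by simpa using h0S)
      (by
        rw [cfcₙHom_id hsa]; exact hh)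
      (by
        have : (star (ContinuousMapZero.id (quasispectrum ℝ h)))
            = ContinuousMapZero.id (quasispectrum ℝ h) := by
          ext x; exact star_trivial _
        rw [this]
        rw [cfcₙHom_id hsa]; exact hh)
      (fun f₁ f₂ h₁ h₂ => by rw [map_add]; exact hadd _ h₁ _ h₂)
      (fun f₁ f₂ h₁ h₂ => by rw [map_mul]; exact hmul _ h₁ _ h₂)
      (fun r f₁ h₁ => by
        rw [map_smul, ← Complex.coe_smul]
        exact hsmul _ _ h₁)
      (fun f₁ h₁ => by
        have : cfcₙHom hsa f₁ ∈ closure S :=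
          mem_closure_iff_frequently.mpr
            (((cfcₙHom_isClosedEmbedding hsa).continuous.tendsto f₁).frequently h₁)
        rwa [hcl.closure_eq] at this)
      g'
  exact key _

lemma approx_unit {S : Set B} (hcl : IsClosed S) (h0S : (0:B) ∈ S)
    (hadd : ∀ x ∈ S, ∀ y ∈ S, x + y ∈ S) (hsmul : ∀ (c : ℂ), ∀ x ∈ S, c • x ∈ S)
    (hmul : ∀ x ∈ S, ∀ y ∈ S, x * y ∈ S) {n : ℕ} (x : Fin n → B)
    (hx : ∀ i, star (x i) * x i ∈ S) (δ : ℝ) (hδ : 0 < δ) :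
    ∃ e ∈ S, IsSelfAdjoint e ∧ ‖e‖ ≤ 1 ∧ ∀ i, ‖x i * e - x i‖ < δ := by
  classical
  set h : B := ∑ i, star (x i) * x i with hh_def
  have hhS : h ∈ S := by
    rw [hh_def]
    refine Finset.sum_induction _ (· ∈ S) (fun a b ha hb => hadd a ha b hb) h0S ?_
    exact fun i _ => hx i
  have hsa : IsSelfAdjoint h := by
    rw [hh_def]
    simp only [IsSelfAdjoint, star_sum, star_mul, star_star]
  have hpos : 0 ≤ h := Finset.sum_nonneg fun i _ => star_mul_self_nonneg _
  set c : ℝ := δ ^ 2 / 2 with hc_def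
  have hc : 0 < c := by positivity
  have hσ : ∀ t ∈ quasispectrum ℝ h, 0 ≤ t := fun t ht =>
    quasispectrum_nonneg_of_nonneg h hpos t ht
  set f : ℝ → ℝ := fun t => t / (t + c) with hf_def
  have hfc : ContinuousOn f (quasispectrum ℝ h) := by
    apply ContinuousOn.div continuousOn_id (by fun_prop)
    intro t ht
    have := hσ t ht
    positivity
  have hf0 : f 0 = 0 := by simp [hf_def]
  set e : B := cfcₙ f h with he_def
  have heS : e ∈ S := cfcn_mem hcl h0S hadd hsmul hmul hhS hsa f hfc hf0
  have hesa : IsSelfAdjoint e := cfcₙ_predicate f h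
  have hnorme : ‖e‖ ≤ 1 := by
    apply norm_cfcₙ_le
    intro t ht
    have ht0 := hσ t ht
    rw [Real.norm_eq_abs, abs_of_nonneg (by positivity)]
    exact div_le_one_of_le₀ (by linarith) (by linarith)
  have hid : cfcₙ (fun t : ℝ => t) h = h := cfcₙ_id' ℝ h
  have hmul1 : cfcₙ (fun t : ℝ => f t * t) h = e * h := by
    rw [cfcₙ_mul f (fun t => t) h hfc hf0 (continuousOn_id) rfl, hid]
  have hmul2 : cfcₙ (fun t : ℝ => t - f t * t) h = h - e * h := by
    rw [cfcₙ_sub (fun t : ℝ => t) (fun t => f t * t) h (continuousOn_id) rfl ?_ ?_, hid, hmul1]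
    · exact hfc.mul continuousOn_id
    · simp [hf0]
  have hmul3 : cfcₙ (fun t : ℝ => (t - f t * t) * f t) h = (h - e * h) * e := by
    rw [cfcₙ_mul (fun t : ℝ => t - f t * t) f h ?_ ?_ hfc hf0, hmul2]
    · exact (continuousOn_id.sub (hfc.mul continuousOn_id))
    · simp [hf0]
  set D : B := (h - e * h) - (h - e * h) * e with hD_def
  have hDg : cfcₙ (fun t : ℝ => (t - f t * t) - (t - f t * t) * f t) h = D := by
    rw [cfcₙ_sub (fun t : ℝ => t - f t * t) (fun t => (t - f t * t) * f t) h ?_ ?_ ?_ ?_,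
      hmul2, hmul3]
    · exact (continuousOn_id.sub (hfc.mul continuousOn_id))
    · simp [hf0]
    · exact (continuousOn_id.sub (hfc.mul continuousOn_id)).mul hfc
    · simp [hf0]
  have hDnorm : ‖D‖ ≤ c / 4 := by
    rw [← hDg]
    apply norm_cfcₙ_le
    intro t ht
    have ht0 := hσ t ht
    have hs : 0 < t + c := by linarith
    have hexpr : t - f t * t - (t - f t * t) * f t = t * c ^ 2 / (t + c) ^ 2 := by
      show t - t / (t + c) * t - (t - t / (t + c) * t) * (t / (t + c)) = t * c ^ 2 / (t + c) ^ 2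
      field_simp
      ring
    rw [hexpr, Real.norm_eq_abs, abs_of_nonneg (by positivity),
      div_le_iff₀ (by positivity)]
    nlinarith [sq_nonneg (t - c)]
  have conj_nonneg : ∀ d : B, 0 ≤ d → 0 ≤ d - e * d - d * e + e * (d * e) := by
    intro d hd
    rw [StarOrderedRing.nonneg_iff] at hd
    induction hd using AddSubmonoid.closure_induction with
    | mem u hu =>
      obtain ⟨s, rfl⟩ := hu
      have key : star s * s - e * (star s * s) - (star s * s) * e + e * ((star s * s) * e)
          = star (s - s * e) * (s - s * e) := by
        rw [star_sub, star_mul, hesa.star_eq]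
        noncomm_ring
      rw [key]
      exact star_mul_self_nonneg _
    | zero => simp
    | add u v _ _ hu hv =>
      have key : (u + v) - e * (u + v) - (u + v) * e + e * ((u + v) * e)
          = (u - e * u - u * e + e * (u * e)) + (v - e * v - v * e + e * (v * e)) := by
        noncomm_ring
      rw [key]
      exact add_nonneg hu hv
  refine ⟨e, heS, hesa, hnorme, fun i => ?_⟩
  set m : B := x i * e - x i with hm_def
  set k : B := star (x i) * x i with hk_def
  have hm1 : star m * m = k - e * k - k * e + e * (k * e) := by
    rw [hm_def, hk_def, star_sub, star_mul, hesa.star_eq]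
    noncomm_ring
  have hkh : k ≤ h := by
    rw [hh_def, hk_def]
    exact Finset.single_le_sum (f := fun j => star (x j) * x j)
      (fun j _ => star_mul_self_nonneg (x j)) (Finset.mem_univ i)
  have hdpos : 0 ≤ (h - k) - e * (h - k) - (h - k) * e + e * ((h - k) * e) :=
    conj_nonneg _ (sub_nonneg.mpr hkh)
  have hDm : D - star m * m = (h - k) - e * (h - k) - (h - k) * e + e * ((h - k) * e) := by
    rw [hm1, hD_def]
    noncomm_ring
  have hle : star m * m ≤ D := sub_nonneg.mp (by rw [hDm]; exact hdpos)
  have hmn : ‖star m * m‖ ≤ ‖D‖ :=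
    CStarAlgebra.norm_le_norm_of_nonneg_of_le (star_mul_self_nonneg m) hle
  have hsq : ‖star m * m‖ = ‖m‖ * ‖m‖ := CStarRing.norm_star_mul_self
  have : ‖m‖ * ‖m‖ ≤ c / 4 := by rw [← hsq]; exact hmn.trans hDnorm
  rw [hc_def] at this
  nlinarith [norm_nonneg m, hδ]

lemma IBISet_mul_left {A : Set B} (I : CIdealIn A) {a z : B} (ha : a ∈ A)
    (hz : z ∈ IBISet I.carrier) : a * z ∈ IBISet I.carrier := by
  have hmaps : ∀ v ∈ Submodule.span ℂ
      {z : B | ∃ p ∈ I.carrier, ∃ b : B, ∃ q ∈ I.carrier, z = p * b * q},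
      a * v ∈ Submodule.span ℂ
        {z : B | ∃ p ∈ I.carrier, ∃ b : B, ∃ q ∈ I.carrier, z = p * b * q} := by
    intro v hv
    induction hv using Submodule.span_induction with
    | mem w hw =>
      obtain ⟨p, hp, b, q, hq, rfl⟩ := hw
      exact Submodule.subset_span ⟨a * p, I.mul_left a ha p hp, b, q, hq, by simp [mul_assoc]⟩
    | zero => rw [mul_zero]; exact Submodule.zero_mem _
    | add u w _ _ hu hw => rw [mul_add]; exact Submodule.add_mem _ hu hw
    | smul c u _ hu => rw [mul_smul_comm]; exact Submodule.smul_mem _ _ hu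
  exact map_mem_closure (continuous_mul_left a) hz hmaps

lemma IBISet_mul_right {A : Set B} (I : CIdealIn A) {a z : B} (ha : a ∈ A)
    (hz : z ∈ IBISet I.carrier) : z * a ∈ IBISet I.carrier := by
  have hmaps : ∀ v ∈ Submodule.span ℂ
      {z : B | ∃ p ∈ I.carrier, ∃ b : B, ∃ q ∈ I.carrier, z = p * b * q},
      v * a ∈ Submodule.span ℂ
        {z : B | ∃ p ∈ I.carrier, ∃ b : B, ∃ q ∈ I.carrier, z = p * b * q} := by
    intro v hv
    induction hv using Submodule.span_induction with
    | mem w hw =>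
      obtain ⟨p, hp, b, q, hq, rfl⟩ := hw
      exact Submodule.subset_span ⟨p, hp, b, q * a, I.mul_right a ha q hq, by simp [mul_assoc]⟩
    | zero => rw [zero_mul]; exact Submodule.zero_mem _
    | add u w _ _ hu hw => rw [add_mul]; exact Submodule.add_mem _ hu hw
    | smul c u _ hu => rw [smul_mul_assoc]; exact Submodule.smul_mem _ _ hu
  exact map_mem_closure (f := fun v => v * a) (continuous_mul_right a) hz hmaps

lemma eq_zero_of_right_ann {C : NonUnitalStarSubalgebra ℂ B} {w : B} (hw : w ∈ C)
    (hann : ∀ c ∈ C, w * c = 0) : w = 0 :=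
  (CStarRing.mul_star_self_eq_zero_iff w).mp (hann _ (star_mem hw))

lemma eq_zero_of_left_ann {C : NonUnitalStarSubalgebra ℂ B} {w : B} (hw : w ∈ C)
    (hann : ∀ c ∈ C, c * w = 0) : w = 0 :=
  (CStarRing.star_mul_self_eq_zero_iff w).mp (hann _ (star_mem hw))

lemma approx_in_closure {S : Set B} (hcl : IsClosed S) (h0S : (0:B) ∈ S)
    (hadd : ∀ x ∈ S, ∀ y ∈ S, x + y ∈ S) (hsmul : ∀ (c : ℂ), ∀ x ∈ S, c • x ∈ S)
    (hmul : ∀ x ∈ S, ∀ y ∈ S, x * y ∈ S) {gen : Set B}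
    (hgen : ∀ z ∈ gen, ∃ y q : B, q ∈ S ∧ star q * q ∈ S ∧ z = y * q)
    {v : B} (hv : v ∈ closure ((Submodule.span ℂ gen : Submodule ℂ B) : Set B))
    (ε : ℝ) (hε : 0 < ε) :
    ∃ e ∈ S, IsSelfAdjoint e ∧ ‖e‖ ≤ 1 ∧ ‖v * e - v‖ < ε := by
  obtain ⟨u, hu, hvu⟩ := Metric.mem_closure_iff.mp hv (ε/3) (by linarith)
  rw [dist_eq_norm] at hvu
  obtain ⟨n, fc, g, hgsum⟩ := Submodule.mem_span_set'.mp hu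
  choose y q hqS hqq hz using fun i : Fin n => hgen (g i) (g i).2
  set M : ℝ := ∑ i, ‖fc i‖ * ‖y i‖ with hM
  have hM0 : 0 ≤ M := Finset.sum_nonneg fun i _ => by positivity
  set δ : ℝ := ε / (3 * (M + 1)) with hδdef
  have hδ : 0 < δ := div_pos hε (by linarith)
  obtain ⟨e, heS, hesa, hnorm, hq_close⟩ := approx_unit hcl h0S hadd hsmul hmul q hqq δ hδ
  refine ⟨e, heS, hesa, hnorm, ?_⟩
  have hu_eq : u = ∑ i, fc i • (y i * q i) := by
    rw [← hgsum]
    exact Finset.sum_congr rfl fun i _ => by rw [hz i]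
  have hue : u * e - u = ∑ i, fc i • (y i * (q i * e - q i)) := by
    rw [hu_eq, Finset.sum_mul, ← Finset.sum_sub_distrib]
    exact Finset.sum_congr rfl fun i _ => by
      rw [smul_mul_assoc, ← smul_sub, mul_sub, mul_assoc]
  have hue_norm : ‖u * e - u‖ ≤ M * δ := by
    rw [hue]
    calc ‖∑ i, fc i • (y i * (q i * e - q i))‖
        ≤ ∑ i, ‖fc i • (y i * (q i * e - q i))‖ := norm_sum_le _ _
      _ ≤ ∑ i, ‖fc i‖ * ‖y i‖ * δ := by
          apply Finset.sum_le_sum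
          intro i _
          rw [norm_smul]
          calc ‖fc i‖ * ‖y i * (q i * e - q i)‖
              ≤ ‖fc i‖ * (‖y i‖ * ‖q i * e - q i‖) :=
                mul_le_mul_of_nonneg_left (norm_mul_le _ _) (norm_nonneg _)
            _ ≤ ‖fc i‖ * ‖y i‖ * δ := by
                rw [mul_assoc]
                exact mul_le_mul_of_nonneg_left
                  (mul_le_mul_of_nonneg_left (le_of_lt (hq_close i)) (norm_nonneg _))
                  (norm_nonneg _)
      _ = M * δ := by rw [hM, Finset.sum_mul]
  have hδle : δ * (M + 1) = ε / 3 := by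
    rw [hδdef]
    field_simp
  have hMδ : M * δ < ε / 3 := by
    calc M * δ < (M + 1) * δ := by nlinarith
      _ = ε / 3 := by rw [mul_comm]; exact hδle
  calc ‖v * e - v‖ = ‖(v - u) * e + (u * e - u) + (u - v)‖ := by
        congr 1
        noncomm_ring
    _ ≤ ‖(v - u) * e + (u * e - u)‖ + ‖u - v‖ := norm_add_le _ _
    _ ≤ ‖(v - u) * e‖ + ‖u * e - u‖ + ‖u - v‖ :=
        add_le_add_left (norm_add_le _ _) _
    _ < ε/3 + ε/3 + ε/3 := by
        have h1 : ‖(v - u) * e‖ ≤ ‖v - u‖ * ‖e‖ := norm_mul_le _ _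
        have h2 : ‖v - u‖ * ‖e‖ ≤ ‖v - u‖ :=
          mul_le_of_le_one_right (norm_nonneg _) hnorm
        have h4 : ‖u - v‖ < ε/3 := by rw [norm_sub_rev]; exact hvu
        have h5 := lt_of_le_of_lt hue_norm hMδ
        have := lt_of_le_of_lt (h1.trans h2) hvu
        linarith
    _ = ε := by ring

lemma dense_span_mul_right (A : NonUnitalStarSubalgebra ℂ B)
    (hnd : Nondegenerate (A : Set B)) :
    Dense ((Submodule.span ℂ {x : B | ∃ b : B, ∃ a ∈ (A : Set B), x = b * a} :
      Submodule ℂ B) : Set B) := by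
  intro v
  have h1 : star v ∈ closure ((Submodule.span ℂ
      {x : B | ∃ a ∈ (A : Set B), ∃ b : B, x = a * b} : Submodule ℂ B) : Set B) := hnd _
  have h2 : v = star (star v) := (star_star v).symm
  have hmaps : ∀ w ∈ Submodule.span ℂ {x : B | ∃ a ∈ (A : Set B), ∃ b : B, x = a * b},
      star w ∈ Submodule.span ℂ {x : B | ∃ b : B, ∃ a ∈ (A : Set B), x = b * a} := by
    intro w hw
    induction hw using Submodule.span_induction with
    | mem z hz =>
      obtain ⟨a, ha, b, rfl⟩ := hz
      exact Submodule.subset_span ⟨star b, star a, star_mem ha, star_mul a b⟩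
    | zero => rw [star_zero]; exact Submodule.zero_mem _
    | add u w _ _ hu hw => rw [star_add]; exact Submodule.add_mem _ hu hw
    | smul c u _ hu => rw [star_smul]; exact Submodule.smul_mem _ _ hu
  rw [h2]
  exact map_mem_closure continuous_star h1 hmaps

lemma IBISet_top (A : NonUnitalStarSubalgebra ℂ B) (hnd : Nondegenerate (A : Set B)) :
    IBISet (A : Set B) = Set.univ := by
  have hWclosed : IsClosed ((Submodule.span ℂ
      {z : B | ∃ p ∈ (A : Set B), ∃ b : B, ∃ q ∈ (A : Set B), z = p * b * q}
      ).topologicalClosure : Set B) := Submodule.isClosed_topologicalClosure _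
  have hgen2 : ∀ z ∈ {x : B | ∃ a ∈ (A : Set B), ∃ b : B, x = a * b},
      z ∈ ((Submodule.span ℂ
        {z : B | ∃ p ∈ (A : Set B), ∃ b : B, ∃ q ∈ (A : Set B), z = p * b * q}
        ).topologicalClosure : Submodule ℂ B) := by
    rintro z ⟨a, ha, b, rfl⟩
    have hb : b ∈ closure ((Submodule.span ℂ
        {x : B | ∃ b' : B, ∃ a' ∈ (A : Set B), x = b' * a'} : Submodule ℂ B) : Set B) :=
      dense_span_mul_right A hnd b
    have hmaps : ∀ w ∈ Submodule.span ℂ {x : B | ∃ b' : B, ∃ a' ∈ (A : Set B), x = b' * a'},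
        a * w ∈ Submodule.span ℂ
          {z : B | ∃ p ∈ (A : Set B), ∃ b : B, ∃ q ∈ (A : Set B), z = p * b * q} := by
      intro w hw
      induction hw using Submodule.span_induction with
      | mem z' hz' =>
        obtain ⟨b', a', ha', rfl⟩ := hz'
        exact Submodule.subset_span ⟨a, ha, b', a', ha', (mul_assoc a b' a').symm⟩
      | zero => rw [mul_zero]; exact Submodule.zero_mem _
      | add u w _ _ hu hw => rw [mul_add]; exact Submodule.add_mem _ hu hw
      | smul c u _ hu => rw [mul_smul_comm]; exact Submodule.smul_mem _ _ hu
    have hmem : a * b ∈ closure ((Submodule.span ℂ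
        {z : B | ∃ p ∈ (A : Set B), ∃ b : B, ∃ q ∈ (A : Set B), z = p * b * q} :
        Submodule ℂ B) : Set B) :=
      map_mem_closure (continuous_mul_left a) hb hmaps
    rwa [← SetLike.mem_coe, Submodule.topologicalClosure_coe]
  have hspan : Submodule.span ℂ {x : B | ∃ a ∈ (A : Set B), ∃ b : B, x = a * b} ≤
      (Submodule.span ℂ
        {z : B | ∃ p ∈ (A : Set B), ∃ b : B, ∃ q ∈ (A : Set B), z = p * b * q}
        ).topologicalClosure :=
    Submodule.span_le.mpr hgen2
  apply Set.eq_univ_of_univ_subset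
  intro z _
  have hz : z ∈ closure ((Submodule.span ℂ
      {x : B | ∃ a ∈ (A : Set B), ∃ b : B, x = a * b} : Submodule ℂ B) : Set B) := hnd z
  have hzW : z ∈ closure (((Submodule.span ℂ
      {z : B | ∃ p ∈ (A : Set B), ∃ b : B, ∃ q ∈ (A : Set B), z = p * b * q}
      ).topologicalClosure : Submodule ℂ B) : Set B) :=
    closure_mono (SetLike.coe_subset_coe.mpr hspan) hz
  rw [hWclosed.closure_eq] at hzW
  show z ∈ closure ((Submodule.span ℂ
      {z : B | ∃ p ∈ (A : Set B), ∃ b : B, ∃ q ∈ (A : Set B), z = p * b * q} :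
      Submodule ℂ B) : Set B)
  rw [← Submodule.topologicalClosure_coe]
  exact hzW

end NCCartanAux

open NCCartanAux

/-- For a non-degenerate inclusion `A ⊆ B` with `A` commutative: `A` is maximal abelian in
`B` if and only if, for every closed two-sided ideal `I` of `A`, every multiplier of `IBI`
commuting with `I` maps `I` into `I`. -/
theorem statement_15 {B : Type*} [NonUnitalCStarAlgebra B] [PartialOrder B] [StarOrderedRing B]
    (A : NonUnitalStarSubalgebra ℂ B) [IsClosed (A : Set B)]
    (hnd : Nondegenerate (A : Set B))
    (hcomm : ∀ a ∈ A, ∀ b ∈ A, a * b = b * a) :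
    (∀ b : B, (∀ a ∈ A, b * a = a * b) → b ∈ A) ↔
      CommutingMultipliersTrivial (A : Set B) := by
  constructor
  · -- maximal abelian implies commuting multipliers trivial
    intro hmasa I C hC τ hτ x hxI
    have memC : ∀ {z : B}, z ∈ IBISet I.carrier → z ∈ C := fun {z} hz => by
      rw [← SetLike.mem_coe, hC]; exact hz
    have hCmem : ∀ z : C, (z : B) ∈ IBISet I.carrier := fun z => by
      rw [← hC]; exact z.2
    have hL : ∀ a ∈ (A : Set B), ∀ z : C, a * (z : B) ∈ C :=
      fun a ha z => memC (IBISet_mul_left I ha (hCmem z))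
    have hR : ∀ a ∈ (A : Set B), ∀ z : C, (z : B) * a ∈ C :=
      fun a ha z => memC (IBISet_mul_right I ha (hCmem z))
    -- τ.snd is a left module map
    have sndmod : ∀ y z : C, ((τ.snd (y * z) : C) : B) = (y : B) * ((τ.snd z : C) : B) := by
      intro y z
      have hwC : ((τ.snd (y * z) : C) : B) - (y : B) * ((τ.snd z : C) : B) ∈ C :=
        sub_mem (τ.snd (y * z)).2 (mul_mem y.2 (τ.snd z).2)
      have key : ∀ c ∈ C,
          (((τ.snd (y * z) : C) : B) - (y : B) * ((τ.snd z : C) : B)) * c = 0 := by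
        intro c hc
        have h1 : ((τ.snd (y * z) : C) : B) * c
            = ((y : B) * (z : B)) * ((τ.fst ⟨c, hc⟩ : C) : B) :=
          congrArg Subtype.val (τ.central (y * z) ⟨c, hc⟩)
        have h2 : ((τ.snd z : C) : B) * c = (z : B) * ((τ.fst ⟨c, hc⟩ : C) : B) :=
          congrArg Subtype.val (τ.central z ⟨c, hc⟩)
        rw [sub_mul, h1, mul_assoc, ← h2, mul_assoc, sub_self]
      exact sub_eq_zero.mp (eq_zero_of_right_ann hwC key)
    -- the element τ.fst x commutes with A
    have claim : ∀ a ∈ (A : Set B), a * ((τ.fst x : C) : B) = ((τ.fst x : C) : B) * a := by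
      intro a ha
      have haxC : a * (x : B) ∈ C := hL a ha x
      have hxaC : (x : B) * a ∈ C := hR a ha x
      have haxI : a * (x : B) ∈ I.carrier := I.mul_left a ha _ hxI
      have hxaI : (x : B) * a ∈ I.carrier := I.mul_right a ha _ hxI
      have claim1 : ((τ.fst ⟨a * (x : B), haxC⟩ : C) : B) = a * ((τ.fst x : C) : B) := by
        have hwC : ((τ.fst ⟨a * (x : B), haxC⟩ : C) : B) - a * ((τ.fst x : C) : B) ∈ C :=
          sub_mem (τ.fst _).2 (hL a ha (τ.fst x))
        have key : ∀ c ∈ C,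
            c * (((τ.fst ⟨a * (x : B), haxC⟩ : C) : B) - a * ((τ.fst x : C) : B)) = 0 := by
          intro c hc
          have hcaC : c * a ∈ C := hR a ha ⟨c, hc⟩
          have e1 : τ.fst ⟨a * (x : B), haxC⟩ = τ.snd ⟨a * (x : B), haxC⟩ := hτ _ haxI
          have e2 : ((τ.snd ((⟨c, hc⟩ : C) * ⟨a * (x : B), haxC⟩) : C) : B)
              = c * ((τ.snd ⟨a * (x : B), haxC⟩ : C) : B) := sndmod ⟨c, hc⟩ _
          have e3 : (⟨c, hc⟩ : C) * (⟨a * (x : B), haxC⟩ : C)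
              = (⟨c * a, hcaC⟩ : C) * x := by
            apply Subtype.ext
            show c * (a * (x : B)) = (c * a) * (x : B)
            rw [mul_assoc]
          have e4 : ((τ.snd ((⟨c * a, hcaC⟩ : C) * x) : C) : B)
              = (c * a) * ((τ.snd x : C) : B) := sndmod _ x
          have e5 : τ.fst x = τ.snd x := hτ x hxI
          rw [mul_sub, e1, ← e2, e3, e4, ← e5, mul_assoc, sub_self]
        exact sub_eq_zero.mp (eq_zero_of_left_ann hwC key)
      have claim2 : ((τ.fst ⟨(x : B) * a, hxaC⟩ : C) : B) = ((τ.fst x : C) : B) * a := by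
        have hwC : ((τ.fst ⟨(x : B) * a, hxaC⟩ : C) : B) - ((τ.fst x : C) : B) * a ∈ C :=
          sub_mem (τ.fst _).2 (hR a ha (τ.fst x))
        have key : ∀ c ∈ C,
            c * (((τ.fst ⟨(x : B) * a, hxaC⟩ : C) : B) - ((τ.fst x : C) : B) * a) = 0 := by
          intro c hc
          have h1 : ((τ.snd ⟨c, hc⟩ : C) : B) * ((x : B) * a)
              = c * ((τ.fst ⟨(x : B) * a, hxaC⟩ : C) : B) :=
            congrArg Subtype.val (τ.central ⟨c, hc⟩ ⟨(x : B) * a, hxaC⟩)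
          have h2 : ((τ.snd ⟨c, hc⟩ : C) : B) * (x : B) = c * ((τ.fst x : C) : B) :=
            congrArg Subtype.val (τ.central ⟨c, hc⟩ x)
          rw [mul_sub, ← h1, ← mul_assoc, h2, mul_assoc, sub_self]
        exact sub_eq_zero.mp (eq_zero_of_left_ann hwC key)
      have hax_eq : (⟨a * (x : B), haxC⟩ : C) = (⟨(x : B) * a, hxaC⟩ : C) :=
        Subtype.ext (hcomm a ha (x : B) (I.subset hxI))
      rw [← claim1, hax_eq, claim2]
    have hfA : ((τ.fst x : C) : B) ∈ A := hmasa _ (fun a ha => (claim a ha).symm)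
    -- conclude membership in I
    have hfC : ((τ.fst x : C) : B) ∈ IBISet I.carrier := hCmem (τ.fst x)
    have hgen : ∀ z ∈ {z : B | ∃ p ∈ I.carrier, ∃ b : B, ∃ q ∈ I.carrier, z = p * b * q},
        ∃ y q : B, q ∈ I.carrier ∧ star q * q ∈ I.carrier ∧ z = y * q := by
      rintro z ⟨p, hp, b, q, hq, rfl⟩
      exact ⟨p * b, q, hq, I.mul_left (star q) (star_mem (I.subset hq)) q hq, rfl⟩
    have hIadd : ∀ u ∈ I.carrier, ∀ v ∈ I.carrier, u + v ∈ I.carrier := I.add_mem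
    have hImul : ∀ u ∈ I.carrier, ∀ v ∈ I.carrier, u * v ∈ I.carrier :=
      fun u hu v hv => I.mul_left u (I.subset hu) v hv
    rw [show I.carrier = closure I.carrier from I.isClosed.closure_eq.symm,
      Metric.mem_closure_iff]
    intro ε hε
    obtain ⟨e, heS, hesa, hnorme, hlt⟩ :=
      approx_in_closure I.isClosed I.zero_mem hIadd I.smul_mem hImul hgen hfC ε hε
    exact ⟨_, I.mul_left _ hfA e heS, by rw [dist_eq_norm, norm_sub_rev]; exact hlt⟩
  · -- commuting multipliers trivial implies maximal abelian
    intro hCMT b hb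
    have hAclosed : IsClosed (A : Set B) := ‹_›
    -- A itself as an ideal of A
    let IA : CIdealIn (A : Set B) :=
      { carrier := (A : Set B)
        subset := subset_rfl
        zero_mem := zero_mem A
        add_mem := fun u hu v hv => add_mem hu hv
        smul_mem := fun c u hu => SMulMemClass.smul_mem c hu
        mul_left := fun a ha u hu => mul_mem ha hu
        mul_right := fun a ha u hu => mul_mem hu ha
        isClosed := hAclosed }
    have hC : ((⊤ : NonUnitalStarSubalgebra ℂ B) : Set B) = IBISet IA.carrier := by
      show ((⊤ : NonUnitalStarSubalgebra ℂ B) : Set B) = IBISet (A : Set B)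
      rw [IBISet_top A hnd]
      rfl
    -- every element commuting with A multiplies A into A
    have main : ∀ b' : B, (∀ a ∈ A, b' * a = a * b') →
        ∀ a ∈ (A : Set B), b' * a ∈ (A : Set B) := by
      intro b' hb'
      let Lmap : (⊤ : NonUnitalStarSubalgebra ℂ B) →ₗ[ℂ] (⊤ : NonUnitalStarSubalgebra ℂ B) :=
        { toFun := fun z => ⟨b' * (z : B), by simp⟩
          map_add' := fun u v => Subtype.ext (by
            show b' * ((u : B) + (v : B)) = b' * (u : B) + b' * (v : B)
            rw [mul_add])
          map_smul' := fun c u => Subtype.ext (by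
            show b' * (c • (u : B)) = c • (b' * (u : B))
            rw [mul_smul_comm]) }
      let Rmap : (⊤ : NonUnitalStarSubalgebra ℂ B) →ₗ[ℂ] (⊤ : NonUnitalStarSubalgebra ℂ B) :=
        { toFun := fun z => ⟨(z : B) * b', by simp⟩
          map_add' := fun u v => Subtype.ext (by
            show ((u : B) + (v : B)) * b' = (u : B) * b' + (v : B) * b'
            rw [add_mul])
          map_smul' := fun c u => Subtype.ext (by
            show (c • (u : B)) * b' = c • ((u : B) * b')
            rw [smul_mul_assoc]) }
      have hLcont : Continuous Lmap :=
        Continuous.subtype_mk ((continuous_mul_left b').comp continuous_subtype_val) _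
      have hRcont : Continuous Rmap :=
        Continuous.subtype_mk ((continuous_mul_right b').comp continuous_subtype_val) _
      let τ : 𝓜(ℂ, (⊤ : NonUnitalStarSubalgebra ℂ B)) :=
        { toProd := (⟨Lmap, hLcont⟩, ⟨Rmap, hRcont⟩)
          central := fun u v => Subtype.ext (by
            show ((u : B) * b') * (v : B) = (u : B) * (b' * (v : B))
            rw [mul_assoc]) }
      have hτ : ∀ z : (⊤ : NonUnitalStarSubalgebra ℂ B), (z : B) ∈ IA.carrier →
          τ.fst z = τ.snd z := fun z hz => Subtype.ext (hb' (z : B) hz)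
      intro a ha
      exact hCMT IA ⊤ hC τ hτ ⟨a, by simp⟩ ha
    have hstarb : ∀ a ∈ A, star b * a = a * star b := by
      intro a ha
      have h1 : b * star a = star a * b := hb (star a) (star_mem ha)
      calc star b * a = star (star a * b) := by rw [star_mul, star_star]
        _ = star (b * star a) := by rw [h1]
        _ = a * star b := by rw [star_mul, star_star]
    have hbA : ∀ a ∈ (A : Set B), b * a ∈ (A : Set B) := main b hb
    have hAb : ∀ a ∈ (A : Set B), a * b ∈ (A : Set B) := by
      intro a ha
      have h1 : star b * star a ∈ (A : Set B) := main (star b) hstarb (star a) (star_mem ha)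
      have h2 : star (star b * star a) ∈ (A : Set B) := star_mem h1
      rwa [star_mul, star_star, star_star] at h2
    -- conclude b ∈ A
    rw [← SetLike.mem_coe, show (A : Set B) = closure (A : Set B) from hAclosed.closure_eq.symm,
      Metric.mem_closure_iff]
    intro ε hε
    have hsb : star b ∈ closure ((Submodule.span ℂ
        {x : B | ∃ b' : B, ∃ a ∈ (A : Set B), x = b' * a} : Submodule ℂ B) : Set B) :=
      dense_span_mul_right A hnd (star b)
    have hgen : ∀ z ∈ {x : B | ∃ b' : B, ∃ a ∈ (A : Set B), x = b' * a},
        ∃ y q : B, q ∈ (A : Set B) ∧ star q * q ∈ (A : Set B) ∧ z = y * q := by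
      rintro z ⟨b'', a, ha, rfl⟩
      exact ⟨b'', a, ha, mul_mem (star_mem ha) ha, rfl⟩
    have hAadd : ∀ u ∈ (A : Set B), ∀ v ∈ (A : Set B), u + v ∈ (A : Set B) :=
      fun u hu v hv => add_mem hu hv
    have hAsmul : ∀ (c : ℂ), ∀ u ∈ (A : Set B), c • u ∈ (A : Set B) :=
      fun c u hu => SMulMemClass.smul_mem c hu
    have hAmul : ∀ u ∈ (A : Set B), ∀ v ∈ (A : Set B), u * v ∈ (A : Set B) :=
      fun u hu v hv => mul_mem hu hv
    obtain ⟨e, heA, hesa, hnorme, hlt⟩ :=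
      approx_in_closure hAclosed (zero_mem A) hAadd hAsmul hAmul hgen hsb ε hε
    have hkey : ‖e * b - b‖ < ε := by
      have hstareq : star (star b * e - star b) = e * b - b := by
        rw [star_sub, star_mul, star_star, hesa.star_eq]
      rw [← hstareq, norm_star]
      exact hlt
    exact ⟨e * b, hAb e heA, by rw [dist_eq_norm, norm_sub_rev]; exact hkey⟩
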